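/- (Levin's theorem) For every finite group G and every n ≥ 1 there exist a group W with Nat.card W = n * (Nat.card G)^n and an injective group homomorphism f : G →* W such that every positive equation of degree n over G has a solution in W: for every g : Fin n → G there exists h : W with (∏ i : Fin n, f (g i) * h) = 1 (the product taken in the natural order of Fin n). -/

import Mathlib

section aux

variable {G : Type} [Group G]

/-- Shift automorphism of `ZMod n → G`. -/
def shiftAut (n : ℕ) (s : ZMod n) : MulAut (ZMod n → G) where
  toFun v := fun j => v (j - s)
  invFun v := fun j => v (j + s)
  left_inv v := by funext j; simp
  right_inv v := by funext j; simp
  map_mul' v w := rfl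

def shiftHom (n : ℕ) : Multiplicative (ZMod n) →* MulAut (ZMod n → G) where
  toFun s := shiftAut n s.toAdd
  map_one' := by ext v j; simp [shiftAut]
  map_mul' s t := by ext v j; simp [shiftAut, sub_sub]

end aux

section lists

variable {G : Type} [Group G]

lemma zip_pal (l : List G) :
    (List.zipWith (fun a b => a * b⁻¹) l l.reverse).prod = 1 := by
  induction l using List.bidirectionalRec with
  | nil => simp
  | singleton a => simp
  | cons_append a l b ih =>
      have hlen : l.length = l.reverse.length := by simp
      have key : List.zipWith (fun a b => a * b⁻¹) (a :: (l ++ [b]))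
          ((a :: (l ++ [b])).reverse)
          = (a * b⁻¹) :: (List.zipWith (fun a b => a * b⁻¹) l l.reverse ++ [b * a⁻¹]) := by
        rw [show (a :: (l ++ [b])).reverse = b :: (l.reverse ++ [a]) by simp]
        rw [List.zipWith_cons_cons, List.zipWith_append (l₁ := l) (l₂ := l.reverse) hlen]
        simp
      rw [key, List.prod_cons, List.prod_append, ih, List.prod_singleton]
      group
lemma zipWith_self {α β : Type*} (f : α → α → β) (L : List α) :
    List.zipWith f L L = L.map (fun a => f a a) := by
  induction L with
  | nil => simp
  | cons a t ih => simp [ih]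

lemma reverse_range (N : ℕ) :
    (List.range N).reverse = (List.range N).map (fun i => N - 1 - i) := by
  apply List.ext_getElem
  · simp
  · intro i h1 h2
    simp only [List.getElem_reverse, List.getElem_range, List.getElem_map, List.length_range]

lemma pal (v : ℕ → G) (N : ℕ) :
    ((List.range N).map (fun i => v i * (v (N - 1 - i))⁻¹)).prod = 1 := by
  have := zip_pal ((List.range N).map v)
  rwa [← List.map_reverse, reverse_range, List.map_map, List.zipWith_map,
    zipWith_self] at this

end lists

section sdp

variable {G : Type} [Group G] {n : ℕ}

abbrev Wr (G : Type) [Group G] (n : ℕ) : Type :=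
  (ZMod n → G) ⋊[shiftHom n] Multiplicative (ZMod n)

/-- The base-component accumulator. -/
def Fa (a : ZMod n → G) : List G → (ZMod n → G)
  | [] => 1
  | x :: t => fun j => x * a j * Fa a t (j - 1)

lemma prodW (a : ZMod n → G) (l : List G) :
    ((l.map (fun x => (⟨fun k => x * a k, Multiplicative.ofAdd 1⟩ : Wr G n))).prod)
      = ⟨Fa a l, Multiplicative.ofAdd ((l.length : ℕ) : ZMod n)⟩ := by
  induction l with
  | nil =>
      ext <;> simp [Fa]
  | cons x t ih =>
      rw [List.map_cons, List.prod_cons, ih]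
      ext j
      · rw [SemidirectProduct.mul_left]
        simp [SemidirectProduct.mul_left, Fa, shiftHom, shiftAut, mul_assoc, -SemidirectProduct.mk_eq_inl_mul_inr]
      · simp [SemidirectProduct.mul_right, Fa]
        rw [add_comm]

lemma FaFormula (a : ZMod n → G) (v : ℕ → G) :
    ∀ (m s : ℕ) (j : ZMod n),
      Fa a ((List.range m).map (fun i => v (s + i))) j
        = ((List.range m).map (fun i => v (s + i) * a (j - (i : ℕ)))).prod := by
  intro m
  induction m with
  | zero => intro s j; simp [Fa]
  | succ m ih =>
      intro s j
      rw [List.range_succ_eq_map]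
      simp only [List.map_cons, List.map_map, List.prod_cons]
      have hm : ∀ (w : ℕ → G), (List.range m).map (w ∘ Nat.succ) =
          (List.range m).map (fun i => w (i + 1)) := by
        intro w; apply List.map_congr_left; intro i _; simp [Nat.succ_eq_add_one]
      rw [hm, hm]
      have h1 : (List.range m).map (fun i => v (s + (i + 1)))
          = (List.range m).map (fun i => v ((s + 1) + i)) := by
        apply List.map_congr_left; intro i _; ring_nf
      show v (s + 0) * a j * Fa a ((List.range m).map fun i => v (s + (i + 1))) (j - 1)
          = v (s + 0) * a (j - (0:ℕ)) * _
      rw [h1, ih (s+1) (j-1)]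
      have h2 : (List.range m).map (fun i => v ((s+1) + i) * a ((j - 1) - (i : ℕ)))
          = (List.range m).map (fun i => v (s + (i + 1)) * a (j - ((i+1 : ℕ) : ZMod n))) := by
        apply List.map_congr_left; intro i _
        have : ((i + 1 : ℕ) : ZMod n) = (i : ℕ) + 1 := by push_cast; ring
        rw [this]
        congr 2
        · ring_nf
        · ring_nf
      rw [h2]
      simp

end sdp

section comp

variable {G : Type} [Group G]

lemma components (n : ℕ) [NeZero n] (u : ZMod n → G) (j : ZMod n) :
    ((List.range n).map (fun i => u (i : ℕ) * (u (j - (i : ℕ)))⁻¹)).prod = 1 := by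
  have hj : ((j.val : ℕ) : ZMod n) = j := by
    rw [ZMod.natCast_val, ZMod.cast_id]
  have hlt : j.val < n := ZMod.val_lt j
  set j0 := j.val with hj0
  set m := n - (j0 + 1) with hm
  have hnm : n = (j0 + 1) + m := by omega
  have key : List.range n = List.range (j0+1) ++ (List.range m).map (fun i => j0 + 1 + i) := by
    rw [hnm, List.range_add]
  rw [key, List.map_append, List.prod_append, List.map_map]
  have b1 : ((List.range (j0+1)).map (fun i => u (i : ℕ) * (u (j - (i : ℕ)))⁻¹)).prod = 1 := by
    have : (List.range (j0+1)).map (fun i => u (i : ℕ) * (u (j - (i : ℕ)))⁻¹)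
        = (List.range (j0+1)).map
            (fun i => (fun k => u (k : ℕ)) i * ((fun k => u (k : ℕ)) ((j0+1) - 1 - i))⁻¹) := by
      apply List.map_congr_left
      intro i hi
      rw [List.mem_range] at hi
      have h2 : (((j0 + 1) - 1 - i : ℕ) : ZMod n) + (i : ℕ) = j := by
        rw [← Nat.cast_add, show (j0 + 1) - 1 - i + i = j0 by omega, hj]
      rw [(eq_sub_of_add_eq h2).symm]
    rw [this, pal (fun k => u (k : ℕ)) (j0+1)]
  have b2 : ((List.range m).map
      ((fun i => u (i : ℕ) * (u (j - (i : ℕ)))⁻¹) ∘ (fun i => j0 + 1 + i))).prod = 1 := by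
    have : (List.range m).map ((fun i => u (i : ℕ) * (u (j - (i : ℕ)))⁻¹) ∘ (fun i => j0 + 1 + i))
        = (List.range m).map (fun i => (fun k => u ((j0 + 1 + k : ℕ) : ZMod n)) i
            * ((fun k => u ((j0 + 1 + k : ℕ) : ZMod n)) (m - 1 - i))⁻¹) := by
      apply List.map_congr_left
      intro i hi
      rw [List.mem_range] at hi
      simp only [Function.comp_apply]
      have h2 : ((j0 + 1 + (m - 1 - i) : ℕ) : ZMod n) + ((j0 + 1 + i : ℕ) : ZMod n) = j := by
        rw [← Nat.cast_add, show j0 + 1 + (m - 1 - i) + (j0 + 1 + i) = j0 + n by omega,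
          Nat.cast_add, ZMod.natCast_self, add_zero, hj]
      rw [(eq_sub_of_add_eq h2).symm]
    rw [this, pal (fun k => u ((j0 + 1 + k : ℕ) : ZMod n)) m]
  rw [b1, b2, one_mul]

end comp


def constHom (G : Type) [Group G] (n : ℕ) : G →* (ZMod n → G) :=
  ⟨⟨fun x _ => x, rfl⟩, fun _ _ => rfl⟩

def embedW (G : Type) [Group G] (n : ℕ) : G →* Wr G n :=
  SemidirectProduct.inl.comp (constHom G n)

/-- Levin's theorem: the wreath product `G ≀ ℤ_n`, of order `n·|G|ⁿ`, contains solutions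
to all positive equations `g₁ x g₂ x ⋯ g_n x = 1` of degree `n` over `G`. -/
theorem levin_theorem (G : Type) [Group G] [Finite G] (n : ℕ) (hn : 1 ≤ n) :
    ∃ (W : Type) (_ : Group W) (f : G →* W),
      Nat.card W = n * (Nat.card G) ^ n ∧
      Function.Injective f ∧
      ∀ g : Fin n → G, ∃ h : W,
        ((List.finRange n).map (fun i => f (g i) * h)).prod = 1 := by
  haveI : NeZero n := ⟨by omega⟩
  refine ⟨Wr G n, inferInstance, embedW G n, ?_, ?_, ?_⟩
  · have e : Wr G n ≃ (ZMod n → G) × Multiplicative (ZMod n) :=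
      ⟨fun x => (x.left, x.right), fun p => ⟨p.1, p.2⟩, fun _ => rfl, fun _ => rfl⟩
    rw [Nat.card_congr e, Nat.card_prod, Nat.card_fun,
      Nat.card_congr (Multiplicative.toAdd), Nat.card_zmod, mul_comm]
  · intro x y hxy
    have := congrFun (congrArg SemidirectProduct.left hxy) 0
    simpa [embedW, constHom] using this
  · intro g
    set u : ZMod n → G := fun k => g ⟨k.val, k.val_lt⟩ with hu
    set a : ZMod n → G := fun k => (u k)⁻¹ with ha
    set v : ℕ → G := fun i => u ((i : ℕ) : ZMod n) with hv
    refine ⟨⟨a, Multiplicative.ofAdd 1⟩, ?_⟩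
    have hgu : ∀ i : Fin n, v i.val = g i := by
      intro i
      simp only [hv, hu]
      congr 1
      ext
      simp [ZMod.val_natCast, Nat.mod_eq_of_lt i.isLt]
    have hterm : (List.finRange n).map (fun i => embedW G n (g i) * ⟨a, Multiplicative.ofAdd 1⟩)
        = ((List.range n).map v).map
            (fun x => (⟨fun k => x * a k, Multiplicative.ofAdd 1⟩ : Wr G n)) := by
      rw [List.map_map, ← List.map_coe_finRange_eq_range, List.map_map]
      apply List.map_congr_left
      intro i _
      simp only [Function.comp_apply]
      ext k
      · simp [embedW, constHom, SemidirectProduct.mul_left, hgu i]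
      · simp [embedW, constHom, SemidirectProduct.mul_right]
    rw [hterm, prodW]
    have hFa : ∀ j : ZMod n, Fa a ((List.range n).map v) j = 1 := by
      intro j
      have h0 : (List.range n).map v = (List.range n).map (fun i => v (0 + i)) := by
        apply List.map_congr_left; intro i _; rw [Nat.zero_add]
      rw [h0, FaFormula a v n 0 j]
      have h1 : (List.range n).map (fun i => v (0 + i) * a (j - (i : ℕ)))
          = (List.range n).map (fun i => u (i : ℕ) * (u (j - (i : ℕ)))⁻¹) := by
        apply List.map_congr_left; intro i _; rw [Nat.zero_add]
      rw [h1, components n u j]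
    ext j
    · simp [hFa j]
    · simp
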